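/- Let H be a square complex block lower triangular matrix with diagonal blocks H_{11},...,H_{NN}, and let H⁽⁰⁾ be the block diagonal matrix with the same diagonal blocks. Then for all ρ ≥ 0, det(I + ρ H H^†) ≥ det(I + ρ H⁽⁰⁾ (H⁽⁰⁾)^†). -/

import Mathlib

open Matrix

namespace Stmt9Aux

open ComplexOrder

lemma det_one_add_psd {n : Type*} [Fintype n] [DecidableEq n]
    {P : Matrix n n ℂ} (hP : P.PosSemidef) :
    ∃ r : ℝ, 1 ≤ r ∧ (1 + P).det = (r : ℂ) := by
  have hH := hP.isHermitian
  refine ⟨∏ i, (1 + hH.eigenvalues i), ?_, ?_⟩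
  · calc (1:ℝ) = ∏ _i : n, 1 := by simp
      _ ≤ _ := Finset.prod_le_prod (by simp) (fun i _ => by
          have := hP.eigenvalues_nonneg i; linarith)
  · set U : Matrix n n ℂ := (Matrix.IsHermitian.eigenvectorUnitary hH : Matrix n n ℂ) with hUdef
    have hU : U * star U = 1 :=
      (Unitary.mem_iff.mp (Matrix.IsHermitian.eigenvectorUnitary hH).2).2
    have key : 1 + P = U * (1 + diagonal (RCLike.ofReal ∘ hH.eigenvalues)) * star U := by
      rw [Matrix.mul_add, Matrix.add_mul, Matrix.mul_one, hU]
      conv_lhs => rw [hH.spectral_theorem, Unitary.conjStarAlgAut_apply]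
    rw [key, det_mul, det_mul, mul_right_comm, ← det_mul, hU, det_one, one_mul]
    have : (1 : Matrix n n ℂ) + diagonal (RCLike.ofReal ∘ hH.eigenvalues)
        = diagonal (fun i => 1 + (hH.eigenvalues i : ℂ)) := by
      rw [← diagonal_one, diagonal_add]
      rfl
    rw [this, det_diagonal]
    push_cast
    rfl

open scoped MatrixOrder in
lemma det_mono {n : Type*} [Fintype n] [DecidableEq n]
    {P Q : Matrix n n ℂ} (hP : P.PosSemidef) (hQ : Q.PosSemidef) :
    ((1 + P).det).re ≤ ((1 + P + Q).det).re := by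
  have hA : (1 + P).PosDef := Matrix.PosDef.one.add_posSemidef hP
  set S : Matrix n n ℂ := CFC.sqrt (1 + P) with hSdef
  have hSS : S * S = 1 + P := by
    exact CFC.sqrt_mul_sqrt_self _ hA.posSemidef.nonneg
  have hSH : Sᴴ = S := by
    exact (CFC.sqrt_nonneg (1 + P)).posSemidef.isHermitian
  have hdet : IsUnit S.det := by
    have h0 : (1 + P).det ≠ 0 := ne_of_gt hA.det_pos
    rw [← hSS, det_mul] at h0
    exact isUnit_iff_ne_zero.mpr (left_ne_zero_of_mul h0)
  have h1 : S * S⁻¹ = 1 := mul_nonsing_inv _ hdet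
  have h2 : (S⁻¹)ᴴ * S = 1 := by
    rw [conjTranspose_nonsing_inv, hSH, nonsing_inv_mul _ hdet]
  have key : 1 + P + Q = S * (1 + S⁻¹ * Q * (S⁻¹)ᴴ) * S := by
    rw [Matrix.mul_add, Matrix.mul_one, Matrix.add_mul, hSS]
    congr 1
    symm
    calc S * (S⁻¹ * Q * (S⁻¹)ᴴ) * S = (S * S⁻¹) * (Q * ((S⁻¹)ᴴ * S)) := by
          simp only [Matrix.mul_assoc]
      _ = Q := by rw [h1, h2, Matrix.one_mul, Matrix.mul_one]
  have hR : (S⁻¹ * Q * (S⁻¹)ᴴ).PosSemidef := hQ.mul_mul_conjTranspose_same (S⁻¹)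
  obtain ⟨a, ha1, haeq⟩ := det_one_add_psd hP
  obtain ⟨r, hr1, hreq⟩ := det_one_add_psd hR
  have : (1 + P + Q).det = ((a * r : ℝ) : ℂ) := by
    rw [key, det_mul, det_mul, mul_right_comm, ← det_mul, hSS, haeq, hreq]
    push_cast
    ring
  rw [this, haeq]
  simp only [Complex.ofReal_re]
  nlinarith

lemma schur_step {a c : Type*} [Fintype a] [DecidableEq a] [Fintype c] [DecidableEq c]
    (A : Matrix a a ℂ) (B : Matrix c a ℂ) (C : Matrix c c ℂ) :
    ((1 + A * Aᴴ).det).re * ((1 + C * Cᴴ).det).re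
      ≤ ((1 + (fromBlocks A 0 B C) * (fromBlocks A 0 B C)ᴴ).det).re := by
  have hAA : (A * Aᴴ).PosSemidef := posSemidef_self_mul_conjTranspose A
  have hP1 : (1 + A * Aᴴ).PosDef := Matrix.PosDef.one.add_posSemidef hAA
  have hK : (1 + Aᴴ * A).PosDef :=
    Matrix.PosDef.one.add_posSemidef (posSemidef_conjTranspose_mul_self A)
  have hdet1 : IsUnit (1 + A * Aᴴ).det := isUnit_iff_ne_zero.mpr (ne_of_gt hP1.det_pos)
  have hdetK : IsUnit (1 + Aᴴ * A).det := isUnit_iff_ne_zero.mpr (ne_of_gt hK.det_pos)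
  haveI : Invertible (1 + A * Aᴴ) := (1 + A * Aᴴ).invertibleOfIsUnitDet hdet1
  have hM : 1 + (fromBlocks A 0 B C) * (fromBlocks A 0 B C)ᴴ
      = fromBlocks (1 + A * Aᴴ) (A * Bᴴ) (B * Aᴴ) (1 + (B * Bᴴ + C * Cᴴ)) := by
    rw [fromBlocks_conjTranspose, fromBlocks_multiply, ← fromBlocks_one, fromBlocks_add]
    simp
  have comm : Aᴴ * (1 + A * Aᴴ)⁻¹ = (1 + Aᴴ * A)⁻¹ * Aᴴ := by
    have h1 : (1 + Aᴴ * A) * Aᴴ = Aᴴ * (1 + A * Aᴴ) := by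
      rw [Matrix.add_mul, Matrix.mul_add, Matrix.one_mul, Matrix.mul_one, Matrix.mul_assoc]
    have h2 : (1 + Aᴴ * A) * (Aᴴ * (1 + A * Aᴴ)⁻¹) = Aᴴ := by
      rw [← Matrix.mul_assoc, h1, mul_nonsing_inv_cancel_right _ _ hdet1]
    calc Aᴴ * (1 + A * Aᴴ)⁻¹
        = (1 + Aᴴ * A)⁻¹ * ((1 + Aᴴ * A) * (Aᴴ * (1 + A * Aᴴ)⁻¹)) :=
          (nonsing_inv_mul_cancel_left _ _ hdetK).symm
      _ = (1 + Aᴴ * A)⁻¹ * Aᴴ := by rw [h2]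
  have hKinv : (1 + Aᴴ * A)⁻¹ * (1 + Aᴴ * A) = 1 := nonsing_inv_mul _ hdetK
  have hone : (1 : Matrix a a ℂ) - (1 + Aᴴ * A)⁻¹ * (Aᴴ * A) = (1 + Aᴴ * A)⁻¹ := by
    rw [Matrix.mul_add, Matrix.mul_one] at hKinv
    exact (eq_sub_of_add_eq hKinv).symm
  have hT : 1 + (B * Bᴴ + C * Cᴴ) - B * Aᴴ * ⅟(1 + A * Aᴴ) * (A * Bᴴ)
      = 1 + C * Cᴴ + B * (1 + Aᴴ * A)⁻¹ * Bᴴ := by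
    rw [invOf_eq_nonsing_inv]
    have e1 : B * Aᴴ * (1 + A * Aᴴ)⁻¹ * (A * Bᴴ)
        = B * ((1 + Aᴴ * A)⁻¹ * (Aᴴ * A)) * Bᴴ := by
      rw [Matrix.mul_assoc B Aᴴ _, comm]
      simp only [Matrix.mul_assoc]
    rw [e1]
    have e2 : B * Bᴴ - B * ((1 + Aᴴ * A)⁻¹ * (Aᴴ * A)) * Bᴴ
        = B * (1 + Aᴴ * A)⁻¹ * Bᴴ := by
      calc B * Bᴴ - B * ((1 + Aᴴ * A)⁻¹ * (Aᴴ * A)) * Bᴴ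
          = B * (1 - (1 + Aᴴ * A)⁻¹ * (Aᴴ * A)) * Bᴴ := by
            rw [Matrix.mul_sub, Matrix.mul_one, Matrix.sub_mul]
        _ = B * (1 + Aᴴ * A)⁻¹ * Bᴴ := by rw [hone]
    calc 1 + (B * Bᴴ + C * Cᴴ) - B * ((1 + Aᴴ * A)⁻¹ * (Aᴴ * A)) * Bᴴ
        = 1 + C * Cᴴ + (B * Bᴴ - B * ((1 + Aᴴ * A)⁻¹ * (Aᴴ * A)) * Bᴴ) := by abel
      _ = 1 + C * Cᴴ + B * (1 + Aᴴ * A)⁻¹ * Bᴴ := by rw [e2]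
  have hQ : (B * (1 + Aᴴ * A)⁻¹ * Bᴴ).PosSemidef :=
    (hK.posSemidef.inv).mul_mul_conjTranspose_same B
  have hCC : (C * Cᴴ).PosSemidef := posSemidef_self_mul_conjTranspose C
  rw [hM, det_fromBlocks₁₁, hT]
  obtain ⟨va, ha1, haeq⟩ := det_one_add_psd hAA
  obtain ⟨vc, hc1, hceq⟩ := det_one_add_psd hCC
  have hmono := det_mono hCC hQ
  obtain ⟨vs, hs1, hseq⟩ := det_one_add_psd (hCC.add hQ)
  rw [← add_assoc] at hseq
  have hcs : vc ≤ vs := by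
    rw [hceq, hseq] at hmono
    simpa using hmono
  rw [haeq, hceq, hseq, ← Complex.ofReal_mul]
  simp only [Complex.ofReal_re]
  nlinarith

def blockEquiv (N : ℕ) (sz : Fin (N + 1) → ℕ) :
    (Fin (sz 0) ⊕ ((i : Fin N) × Fin (sz i.succ))) ≃ ((i : Fin (N + 1)) × Fin (sz i)) where
  toFun := Sum.elim (fun x => ⟨0, x⟩) (fun p => ⟨p.1.succ, p.2⟩)
  invFun := fun p => Fin.cases (motive := fun i => Fin (sz i) → _)
    (fun x => Sum.inl x) (fun i x => Sum.inr ⟨i, x⟩) p.1 p.2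
  left_inv := by rintro (x | ⟨i, x⟩) <;> simp
  right_inv := by
    rintro ⟨i, x⟩
    induction i using Fin.cases <;> simp

lemma main_ineq : ∀ (N : ℕ) (sz : Fin N → ℕ)
    (H : Matrix ((i : Fin N) × Fin (sz i)) ((i : Fin N) × Fin (sz i)) ℂ),
    (∀ p q : (i : Fin N) × Fin (sz i), p.1 < q.1 → H p q = 0) →
    ∏ i : Fin N, ((1 + (Matrix.of fun x y => H ⟨i, x⟩ ⟨i, y⟩)
        * (Matrix.of fun x y => H ⟨i, x⟩ ⟨i, y⟩)ᴴ).det).re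
      ≤ ((1 + H * Hᴴ).det).re := by
  intro N
  induction N with
  | zero =>
    intro sz H _
    haveI : IsEmpty ((i : Fin 0) × Fin (sz i)) := ⟨fun p => p.1.elim0⟩
    simp [Matrix.det_isEmpty]
  | succ N ih =>
    intro sz H hblt
    set e := blockEquiv N sz with hedef
    set A : Matrix (Fin (sz 0)) (Fin (sz 0)) ℂ :=
      Matrix.of fun x y => H ⟨0, x⟩ ⟨0, y⟩ with hAdef
    set B : Matrix ((i : Fin N) × Fin (sz i.succ)) (Fin (sz 0)) ℂ :=
      Matrix.of fun p y => H ⟨p.1.succ, p.2⟩ ⟨0, y⟩ with hBdef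
    set C : Matrix ((i : Fin N) × Fin (sz i.succ)) ((i : Fin N) × Fin (sz i.succ)) ℂ :=
      Matrix.of fun p q => H ⟨p.1.succ, p.2⟩ ⟨q.1.succ, q.2⟩ with hCdef
    have hsub : H.submatrix e e = fromBlocks A 0 B C := by
      ext pq rs
      cases pq with
      | inl x =>
        cases rs with
        | inl y => rfl
        | inr q =>
          show H ⟨0, x⟩ ⟨q.1.succ, q.2⟩ = 0
          exact hblt _ _ (Fin.succ_pos q.1)
      | inr p =>
        cases rs with
        | inl y => rfl
        | inr q => rfl
    have hdet : ((1 + (fromBlocks A 0 B C) * (fromBlocks A 0 B C)ᴴ)).det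
        = (1 + H * Hᴴ).det := by
      rw [← hsub, conjTranspose_submatrix, submatrix_mul_equiv, ← submatrix_one_equiv e]
      have hadd : submatrix (1 : Matrix _ _ ℂ) ⇑e ⇑e + (H * Hᴴ).submatrix ⇑e ⇑e
          = (1 + H * Hᴴ).submatrix ⇑e ⇑e := by
        ext p q
        simp [Matrix.one_apply, EmbeddingLike.apply_eq_iff_eq]
      rw [hadd, det_submatrix_equiv_self]
    have hC : ∀ p q : (i : Fin N) × Fin (sz i.succ), p.1 < q.1 → C p q = 0 :=
      fun p q h => hblt _ _ (by simpa using h)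
    have hIH := ih (fun i => sz i.succ) C hC
    have hCd : ∀ i : Fin N,
        (Matrix.of fun x y => C ⟨i, x⟩ ⟨i, y⟩)
          = (Matrix.of fun x y => H ⟨i.succ, x⟩ ⟨i.succ, y⟩ :
              Matrix (Fin (sz i.succ)) (Fin (sz i.succ)) ℂ) := fun i => rfl
    rw [Fin.prod_univ_succ]
    obtain ⟨va, ha1, haeq⟩ := det_one_add_psd (posSemidef_self_mul_conjTranspose A)
    have h0 : (0:ℝ) ≤ ((1 + A * Aᴴ).det).re := by rw [haeq]; simp; linarith
    calc ((1 + A * Aᴴ).det).re * ∏ i : Fin N,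
          ((1 + (Matrix.of fun x y => H ⟨i.succ, x⟩ ⟨i.succ, y⟩)
            * (Matrix.of fun x y => H ⟨i.succ, x⟩ ⟨i.succ, y⟩)ᴴ).det).re
        ≤ ((1 + A * Aᴴ).det).re * ((1 + C * Cᴴ).det).re := by
          apply mul_le_mul_of_nonneg_left _ h0
          simpa [hCd] using hIH
      _ ≤ ((1 + (fromBlocks A 0 B C) * (fromBlocks A 0 B C)ᴴ).det).re := schur_step A B C
      _ = ((1 + H * Hᴴ).det).re := by rw [hdet]

lemma diag_det : ∀ (N : ℕ) (sz : Fin N → ℕ)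
    (H : Matrix ((i : Fin N) × Fin (sz i)) ((i : Fin N) × Fin (sz i)) ℂ),
    (∀ p q : (i : Fin N) × Fin (sz i), p.1 ≠ q.1 → H p q = 0) →
    (1 + H * Hᴴ).det
      = ∏ i : Fin N, (1 + (Matrix.of fun x y => H ⟨i, x⟩ ⟨i, y⟩)
          * (Matrix.of fun x y => H ⟨i, x⟩ ⟨i, y⟩)ᴴ).det := by
  intro N
  induction N with
  | zero =>
    intro sz H _
    haveI : IsEmpty ((i : Fin 0) × Fin (sz i)) := ⟨fun p => p.1.elim0⟩
    simp [Matrix.det_isEmpty]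
  | succ N ih =>
    intro sz H hd
    set e := blockEquiv N sz with hedef
    set A : Matrix (Fin (sz 0)) (Fin (sz 0)) ℂ :=
      Matrix.of fun x y => H ⟨0, x⟩ ⟨0, y⟩ with hAdef
    set C : Matrix ((i : Fin N) × Fin (sz i.succ)) ((i : Fin N) × Fin (sz i.succ)) ℂ :=
      Matrix.of fun p q => H ⟨p.1.succ, p.2⟩ ⟨q.1.succ, q.2⟩ with hCdef
    have hsub : H.submatrix e e = fromBlocks A 0 0 C := by
      ext pq rs
      cases pq with
      | inl x =>
        cases rs with
        | inl y => rfl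
        | inr q =>
          show H ⟨0, x⟩ ⟨q.1.succ, q.2⟩ = 0
          exact hd _ _ (Fin.ne_of_lt (Fin.succ_pos q.1))
      | inr p =>
        cases rs with
        | inl y =>
          show H ⟨p.1.succ, p.2⟩ ⟨0, y⟩ = 0
          exact hd _ _ (Fin.ne_of_gt (Fin.succ_pos p.1))
        | inr q => rfl
    have hdet : ((1 + (fromBlocks A 0 0 C) * (fromBlocks A 0 0 C)ᴴ)).det
        = (1 + H * Hᴴ).det := by
      rw [← hsub, conjTranspose_submatrix, submatrix_mul_equiv, ← submatrix_one_equiv e]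
      have hadd : submatrix (1 : Matrix _ _ ℂ) ⇑e ⇑e + (H * Hᴴ).submatrix ⇑e ⇑e
          = (1 + H * Hᴴ).submatrix ⇑e ⇑e := by
        ext p q
        simp [Matrix.one_apply, EmbeddingLike.apply_eq_iff_eq]
      rw [hadd, det_submatrix_equiv_self]
    have hblock : 1 + (fromBlocks A 0 0 C) * (fromBlocks A 0 0 C)ᴴ
        = fromBlocks (1 + A * Aᴴ) 0 0 (1 + C * Cᴴ) := by
      rw [fromBlocks_conjTranspose, fromBlocks_multiply, ← fromBlocks_one, fromBlocks_add]
      simp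
    have hC : ∀ p q : (i : Fin N) × Fin (sz i.succ), p.1 ≠ q.1 → C p q = 0 :=
      fun p q h => hd _ _ (by simpa [Fin.succ_inj] using h)
    rw [← hdet, hblock, det_fromBlocks_zero₂₁, ih (fun i => sz i.succ) C hC,
      Fin.prod_univ_succ]
    rfl

lemma det_one_add_self_mul_conj {n : Type*} [Fintype n] [DecidableEq n]
    (X : Matrix n n ℂ) : ∃ r : ℝ, 1 ≤ r ∧ (1 + X * Xᴴ).det = (r : ℂ) :=
  det_one_add_psd (posSemidef_self_mul_conjTranspose X)

end Stmt9Aux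

/-- For a block lower triangular matrix `H` (blocks `H_{ij}` of sizes `N_i × N_j`,
zero for `i < j`), and the block diagonal part `H⁽⁰⁾`,
`det(I + ρ H H†) ≥ det(I + ρ H⁽⁰⁾ (H⁽⁰⁾)†)` for all `ρ ≥ 0`. -/
theorem stmt_9 (N : ℕ) (sz : Fin N → ℕ)
    (H : Matrix ((i : Fin N) × Fin (sz i)) ((i : Fin N) × Fin (sz i)) ℂ)
    (hblt : ∀ p q : (i : Fin N) × Fin (sz i), p.1 < q.1 → H p q = 0)
    (H0 : Matrix ((i : Fin N) × Fin (sz i)) ((i : Fin N) × Fin (sz i)) ℂ)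
    (hH0 : ∀ p q : (i : Fin N) × Fin (sz i), H0 p q = if p.1 = q.1 then H p q else 0)
    (ρ : ℝ) (hρ : 0 ≤ ρ) :
    ((1 + ρ • (H0 * H0ᴴ)).det).re ≤ ((1 + ρ • (H * Hᴴ)).det).re := by
  set c : ℂ := ((Real.sqrt ρ : ℝ) : ℂ) with hcdef
  have hcc : c * c = (ρ : ℂ) := by
    rw [hcdef, ← Complex.ofReal_mul, Real.mul_self_sqrt hρ]
  have hstar : star c = c := by rw [hcdef]; exact Complex.conj_ofReal _
  have habsorb : ∀ X : Matrix ((i : Fin N) × Fin (sz i)) ((i : Fin N) × Fin (sz i)) ℂ,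
      ρ • (X * Xᴴ) = (c • X) * (c • X)ᴴ := by
    intro X
    rw [conjTranspose_smul, hstar, Matrix.smul_mul, Matrix.mul_smul, smul_smul, hcc]
    ext i j
    simp [Complex.real_smul]
  rw [habsorb H, habsorb H0]
  set G := c • H with hGdef
  set G0 := c • H0 with hG0def
  have hGblt : ∀ p q : (i : Fin N) × Fin (sz i), p.1 < q.1 → G p q = 0 := by
    intro p q h
    simp [hGdef, Matrix.smul_apply, hblt p q h]
  have hG0d : ∀ p q : (i : Fin N) × Fin (sz i), p.1 ≠ q.1 → G0 p q = 0 := by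
    intro p q h
    simp [hG0def, Matrix.smul_apply, hH0 p q, if_neg h]
  have hdiag : ∀ i : Fin N,
      (Matrix.of fun x y => G0 ⟨i, x⟩ ⟨i, y⟩ : Matrix (Fin (sz i)) (Fin (sz i)) ℂ)
        = Matrix.of fun x y => G ⟨i, x⟩ ⟨i, y⟩ := by
    intro i
    ext x y
    simp [hG0def, hGdef, Matrix.smul_apply, hH0]
  have hchain := Stmt9Aux.diag_det N sz G0 hG0d
  simp only [hdiag] at hchain
  have hrep : ∀ i : Fin N, ∃ r : ℝ, 1 ≤ r ∧
      (1 + (Matrix.of fun x y => G ⟨i, x⟩ ⟨i, y⟩ : Matrix (Fin (sz i)) (Fin (sz i)) ℂ)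
        * (Matrix.of fun x y => G ⟨i, x⟩ ⟨i, y⟩)ᴴ).det = (r : ℂ) :=
    fun i => Stmt9Aux.det_one_add_self_mul_conj _
  choose r hr1 hr2 using hrep
  have hmain := Stmt9Aux.main_ineq N sz G hGblt
  calc ((1 + G0 * G0ᴴ).det).re
      = ((∏ i : Fin N, ((r i : ℝ) : ℂ)).re) := by rw [hchain]; simp_rw [hr2]
    _ = ∏ i : Fin N, r i := by norm_cast
    _ = ∏ i : Fin N, ((1 + (Matrix.of fun x y => G ⟨i, x⟩ ⟨i, y⟩)
          * (Matrix.of fun x y => G ⟨i, x⟩ ⟨i, y⟩)ᴴ).det).re := by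
        apply Finset.prod_congr rfl
        intro i _
        rw [hr2 i]
        simp
    _ ≤ ((1 + G * Gᴴ).det).re := hmain
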